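/- Let f : X → Y be a continuous map, where X is a path-connected normal topological space and Y is a metrizable space with covering dimension dim Y ≤ n. If cat* f ≤ m, then cat X ≤ n + m. -/

import Mathlib

open Set Topology

/-- A subset `U` of a topological space `X` is `X`-contractible if the inclusion
`U ↪ X` is nullhomotopic (i.e. `U` can be contracted to a point within `X`). -/
def ContractibleIn {X : Type*} [TopologicalSpace X] (U : Set X) : Prop :=
  ContinuousMap.Nullhomotopic (⟨fun x => (x : X), continuous_subtype_val⟩ : C(U, X))

/-- `cat X ≤ n` : the Lusternik–Schnirelmann category of `X` is at most `n`, i.e.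
`X` admits an open cover by `n + 1` `X`-contractible sets. -/
def CatLE (X : Type*) [TopologicalSpace X] (n : ℕ) : Prop :=
  ∃ U : Fin (n + 1) → Set X,
    (∀ i, IsOpen (U i)) ∧ (∀ i, ContractibleIn (U i)) ∧ (⋃ i, U i) = univ

/-- A family `U` of subsets of `X` is uniformly `f`-contractible if every `y ∈ Y` has a
neighborhood `V` such that each `U i ∩ f ⁻¹' V` is `X`-contractible. -/
def UnifContractible {X Y : Type*} [TopologicalSpace X] [TopologicalSpace Y]
    (f : X → Y) {ι : Type*} (U : ι → Set X) : Prop :=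
  ∀ y : Y, ∃ V ∈ 𝓝 y, ∀ i, ContractibleIn (U i ∩ f ⁻¹' V)

/-- `cat* f ≤ n` : `X` admits a uniformly `f`-contractible open cover by `n + 1` sets. -/
def CatStarLE {X Y : Type*} [TopologicalSpace X] [TopologicalSpace Y]
    (f : X → Y) (n : ℕ) : Prop :=
  ∃ U : Fin (n + 1) → Set X,
    (∀ i, IsOpen (U i)) ∧ (⋃ i, U i) = univ ∧ UnifContractible f U

/-- `dim Y ≤ n` : every open cover of `Y` admits an open refinement of multiplicity
at most `n + 1` (covering dimension). -/
def CovDimLE (Y : Type*) [TopologicalSpace Y] (n : ℕ) : Prop :=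
  ∀ C : Set (Set Y), (∀ c ∈ C, IsOpen c) → ⋃₀ C = univ →
    ∃ W : Set (Set Y), (∀ w ∈ W, IsOpen w) ∧ ⋃₀ W = univ ∧
      (∀ w ∈ W, ∃ c ∈ C, w ⊆ c) ∧ ∀ y : Y, {w ∈ W | y ∈ w}.encard ≤ (n + 1 : ℕ)

open Metric





theorem contractibleIn_empty {X : Type*} [TopologicalSpace X] [Nonempty X] :
    ContractibleIn (∅ : Set X) := by
  refine ⟨Classical.arbitrary X, ?_⟩
  have h : (⟨fun x => (x : X), continuous_subtype_val⟩ : C((∅ : Set X), X)) =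
      ContinuousMap.const _ (Classical.arbitrary X) :=
    ContinuousMap.ext fun x => absurd x.2 (Set.notMem_empty _)
  rw [h]

theorem ContractibleIn.mono {X : Type*} [TopologicalSpace X] {A B : Set X}
    (hB : ContractibleIn B) (h : A ⊆ B) : ContractibleIn A := by
  have he : (⟨fun x => (x : X), continuous_subtype_val⟩ : C(A, X)) =
      (⟨fun x => (x : X), continuous_subtype_val⟩ : C(B, X)).comp
        ⟨Set.inclusion h, continuous_inclusion h⟩ := by
    ext x; rfl
  unfold ContractibleIn
  rw [he]
  exact hB.comp_left _

theorem contractibleIn_iUnion_of_disjoint {X : Type*} [TopologicalSpace X]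
    [PathConnectedSpace X] {ι : Type*} (P : ι → Set X)
    (hO : ∀ l, IsOpen (P l)) (hC : ∀ l, ContractibleIn (P l))
    (hD : Pairwise (Function.onFun Disjoint P)) : ContractibleIn (⋃ l, P l) := by
  have hne : Nonempty X := PathConnectedSpace.nonempty
  set x₀ : X := Classical.arbitrary X with hx₀
  -- for each l, a homotopy from the inclusion of `P l` to the constant map at `x₀`
  have key : ∀ l, Nonempty (ContinuousMap.Homotopy
      (⟨fun x => (x : X), continuous_subtype_val⟩ : C(P l, X))
      (ContinuousMap.const _ x₀)) := by
    intro l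
    obtain ⟨y, hy⟩ := hC l
    obtain ⟨F⟩ := hy
    obtain ⟨γ⟩ := PathConnectedSpace.joined y x₀
    refine ⟨F.trans ?_⟩
    exact
      { toFun := fun p => γ p.1
        continuous_toFun := γ.continuous.comp continuous_fst
        map_zero_left := fun x => γ.source
        map_one_left := fun x => γ.target }
  have F := fun l => (key l).some
  -- glue the homotopies
  set α := (unitInterval × (⋃ l, P l : Set X))
  set S : ι → Set α := fun l => {z : α | (z.2 : X) ∈ P l} with hS
  have hSopen : ∀ l, IsOpen (S l) := fun l =>
    (hO l).preimage (continuous_subtype_val.comp continuous_snd)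
  set φ : ∀ l, C(S l, X) := fun l =>
    (F l).toContinuousMap.comp
      ⟨fun z => ((z : α).1, ⟨((z : α).2 : X), z.2⟩),
        (continuous_fst.comp continuous_subtype_val).prodMk
          ((continuous_subtype_val.comp (continuous_snd.comp
            continuous_subtype_val)).subtype_mk _)⟩ with hφdef
  have hφ : ∀ (i j) (z : α) (hzi : z ∈ S i) (hzj : z ∈ S j),
      φ i ⟨z, hzi⟩ = φ j ⟨z, hzj⟩ := by
    intro i j z hzi hzj
    rcases eq_or_ne i j with rfl | hij
    · rfl
    · exact (Set.disjoint_left.1 (hD hij) hzi hzj).elim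
  have hScov : ∀ z : α, ∃ l, S l ∈ 𝓝 z := by
    intro z
    obtain ⟨s, ⟨l, rfl⟩, hzs⟩ := z.2.2
    exact ⟨l, (hSopen l).mem_nhds hzs⟩
  set Q : C(α, X) := ContinuousMap.liftCover S φ hφ hScov with hQ
  refine ⟨x₀, ⟨{ toFun := Q, continuous_toFun := Q.continuous, map_zero_left := ?_, map_one_left := ?_ }⟩⟩
  · intro x
    obtain ⟨s, ⟨l, rfl⟩, hxs⟩ := x.2
    have h0 : ((0 : unitInterval), x) ∈ S l := hxs
    have := ContinuousMap.liftCover_coe (S := S) (φ := φ) (hφ := hφ) (hS := hScov) ⟨((0 : unitInterval), x), h0⟩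
    simp only [hQ] at *
    rw [this]
    exact (F l).map_zero_left _
  · intro x
    obtain ⟨s, ⟨l, rfl⟩, hxs⟩ := x.2
    have h1 : ((1 : unitInterval), x) ∈ S l := hxs
    have := ContinuousMap.liftCover_coe (S := S) (φ := φ) (hφ := hφ) (hS := hScov) ⟨((1 : unitInterval), x), h1⟩
    simp only [hQ] at *
    rw [this]
    exact (F l).map_one_left _

/-- Threshold-based "Ostrand columns": from an open cover by `N+1` sets of a normal space,
produce `k` columns, each a disjoint open family refining the cover, such that every point
is covered in at least `k - N` columns. -/
theorem ostrand_columns {X : Type*} [TopologicalSpace X] [NormalSpace X] {N : ℕ}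
    (U : Fin (N + 1) → Set X) (hO : ∀ i, IsOpen (U i)) (hc : (⋃ i, U i) = univ) (k : ℕ) :
    ∃ V : Fin (N + 1) → Fin k → Set X,
      (∀ i j, IsOpen (V i j)) ∧ (∀ i j, V i j ⊆ U i) ∧
      (∀ j, ∀ i i', i ≠ i' → Disjoint (V i j) (V i' j)) ∧
      (∀ x, k ≤ {j | ∃ i, x ∈ V i j}.ncard + N) := by
  classical
  -- shrink the cover
  obtain ⟨v, hv1, hv2, hv3⟩ := exists_subset_iUnion_closure_subset isClosed_univ hO
    (fun x _ => Set.toFinite _) hc.ge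
  -- Urysohn functions
  have hury : ∀ i, ∃ g : C(X, ℝ), EqOn g 0 (U i)ᶜ ∧ EqOn g 1 (closure (v i)) ∧
      ∀ x, g x ∈ Icc (0 : ℝ) 1 := by
    intro i
    refine exists_continuous_zero_one_of_isClosed (hO i).isClosed_compl isClosed_closure ?_
    exact Set.disjoint_left.2 fun x hx hx' => hx (hv3 i hx')
  choose g hg0 hg1 hg01 using hury
  -- everyone attains 1 somewhere
  have hone : ∀ x, ∃ i, g i x = 1 := by
    intro x
    obtain ⟨s, ⟨i, rfl⟩, hxs⟩ := hv1 (mem_univ x)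
    exact ⟨i, hg1 i (subset_closure hxs)⟩
  -- thresholds
  set a : Fin k → ℝ := fun j => ((j : ℕ) + 1) / (k + 1) with ha
  have ha0 : ∀ j, 0 < a j := fun j => by positivity
  have ha1 : ∀ j, a j < 1 := by
    intro j
    rw [ha, div_lt_one (by positivity)]
    have := j.isLt
    have h2 : ((j : ℕ) : ℝ) + 1 < (k : ℝ) + 1 := by
      have : ((j : ℕ) : ℝ) < (k : ℝ) := Nat.cast_lt.2 this
      linarith
    linarith
  have hainj : Function.Injective a := by
    intro j j' hjj
    rw [ha] at hjj
    field_simp at hjj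
    exact Fin.ext (by exact_mod_cast (add_right_cancel hjj))
  -- the columns
  set V : Fin (N + 1) → Fin k → Set X := fun i j =>
    {x | a j < g i x} ∩ ⋂ i', (if i' < i then {x | g i' x < a j} else {x | g i' x ≠ a j})
    with hV
  refine ⟨V, ?_, ?_, ?_, ?_⟩
  · intro i j
    refine (isOpen_lt continuous_const (g i).continuous).inter (isOpen_iInter_of_finite fun i' => ?_)
    split_ifs
    · exact isOpen_lt (g i').continuous continuous_const
    · exact isOpen_ne_fun (g i').continuous continuous_const
  · intro i j x hx
    by_contra hxu
    have h0 : g i x = 0 := hg0 i hxu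
    have h1 : a j < g i x := hx.1
    rw [h0] at h1
    exact absurd h1 (not_lt.2 (ha0 j).le)
  · intro j i i' hne
    rcases hne.lt_or_gt with hlt | hlt
    · refine Set.disjoint_left.2 fun x hx hx' => ?_
      have h1 : a j < g i x := hx.1
      have h2 : g i x < a j := by
        have := Set.mem_iInter.1 hx'.2 i
        rwa [if_pos hlt] at this
      linarith
    · refine Set.disjoint_left.2 fun x hx hx' => ?_
      have h1 : a j < g i' x := hx'.1
      have h2 : g i' x < a j := by
        have := Set.mem_iInter.1 hx.2 i'
        rwa [if_pos hlt] at this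
      linarith
  · intro x
    classical
    set Bad : Set (Fin k) := {j | ∃ i, g i x = a j} with hBad
    -- bad columns are few
    obtain ⟨i₀, hi₀⟩ := hone x
    have hchoice : ∀ j ∈ Bad, ∃ i, g i x = a j := fun j hj => hj
    choose ρ hρ using hchoice
    have hBadcard : Bad.ncard ≤ N := by
      have hmaps : ∀ j ∈ Bad, (fun j' => if h : j' ∈ Bad then ρ j' h else i₀) j ∈ {i | i ≠ i₀} := by
        intro j hj
        simp only [dif_pos hj, Set.mem_setOf_eq]
        intro heq
        have := hρ j hj
        rw [heq, hi₀] at this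
        exact absurd this.symm (ne_of_lt (ha1 j))
      have hinj : Set.InjOn (fun j' => if h : j' ∈ Bad then ρ j' h else i₀) Bad := by
        intro j hj j' hj' heq
        simp only [dif_pos hj, dif_pos hj'] at heq
        have e1 := hρ j hj
        have e2 := hρ j' hj'
        rw [heq] at e1
        exact hainj (e1.symm.trans e2)
      have hcard := Set.ncard_le_ncard_of_injOn _ hmaps hinj (Set.toFinite _)
      have he : {i : Fin (N+1) | i ≠ i₀} = ({i₀} : Set (Fin (N+1)))ᶜ := by ext i; simp
      have h3 : ({i₀} : Set (Fin (N+1))).ncard + ({i₀} : Set (Fin (N+1)))ᶜ.ncard = N + 1 := by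
        rw [Set.ncard_add_ncard_compl]
        simp
      have h4 : ({i₀} : Set (Fin (N+1))).ncard = 1 := Set.ncard_singleton _
      rw [he] at hcard
      omega
    -- good columns are covered
    have hgood : ∀ j, j ∉ Bad → ∃ i, x ∈ V i j := by
      intro j hj
      have hne : (Finset.univ.filter fun i => a j < g i x).Nonempty :=
        ⟨i₀, Finset.mem_filter.2 ⟨Finset.mem_univ _, by rw [hi₀]; exact ha1 j⟩⟩
      set i := (Finset.univ.filter fun i => a j < g i x).min' hne with hi
      have him : a j < g i x := (Finset.mem_filter.1 ((Finset.univ.filter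
        fun i => a j < g i x).min'_mem hne)).2
      refine ⟨i, him, Set.mem_iInter.2 fun i' => ?_⟩
      split_ifs with hlt
      · have hi'nm : i' ∉ Finset.univ.filter fun i => a j < g i x := by
          intro hmem
          exact absurd (Finset.min'_le _ _ hmem) (not_le.2 hlt)
        have hle : g i' x ≤ a j := not_lt.1 fun hgt =>
          hi'nm (Finset.mem_filter.2 ⟨Finset.mem_univ _, hgt⟩)
        have hne' : g i' x ≠ a j := fun heq => hj ⟨i', heq⟩
        exact lt_of_le_of_ne hle hne'
      · exact fun heq => hj ⟨i', heq⟩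
    have hsub : Badᶜ ⊆ {j | ∃ i, x ∈ V i j} := fun j hj => hgood j hj
    have h1 : Badᶜ.ncard ≤ {j | ∃ i, x ∈ V i j}.ncard :=
      Set.ncard_le_ncard hsub (Set.toFinite _)
    have h2 : Bad.ncard + Badᶜ.ncard = k := by
      rw [Set.ncard_add_ncard_compl]
      simp
    omega

/-- Decomposition of a cover of multiplicity `≤ n+1` of a metric space into `n+1`
disjoint families. -/
theorem exists_disjoint_families {Y : Type*} [MetricSpace Y] (n : ℕ) (W : Set (Set Y))
    (hWo : ∀ w ∈ W, IsOpen w) (hWc : ⋃₀ W = univ) (hWn : univ ∉ W)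
    (hmult : ∀ y : Y, {w ∈ W | y ∈ w}.encard ≤ (n + 1 : ℕ)) :
    ∃ B : Finset (Set Y) → Set Y,
      (∀ σ, IsOpen (B σ)) ∧
      (∀ σ σ' : Finset (Set Y), ↑σ ⊆ W → ↑σ' ⊆ W → σ ≠ σ' → σ.card = σ'.card →
        Disjoint (B σ) (B σ')) ∧
      (∀ σ, ∀ a ∈ σ, B σ ⊆ a) ∧
      (∀ y : Y, ∃ σ : Finset (Set Y), ↑σ ⊆ W ∧ 1 ≤ σ.card ∧ σ.card ≤ n + 1 ∧ y ∈ B σ) := by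
  classical
  set φ : Set Y → Y → ℝ := fun w y => min (infDist y wᶜ) 1 with hφ
  have hφc : ∀ w, Continuous (φ w) := fun w => (continuous_infDist_pt _).min continuous_const
  have hφ0 : ∀ w y, 0 ≤ φ w y := fun w y => le_min (infDist_nonneg) zero_le_one
  have hφ1 : ∀ w y, φ w y ≤ 1 := fun w y => min_le_right _ _
  have hφlip : ∀ w (y z : Y), φ w y ≤ φ w z + dist y z := by
    intro w y z
    have hd : infDist y wᶜ ≤ infDist z wᶜ + dist y z := infDist_le_infDist_add_dist
    have h1 : (1 : ℝ) ≤ 1 + dist y z := by linarith [dist_nonneg (x := y) (y := z)]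
    calc φ w y ≤ min (infDist z wᶜ + dist y z) (1 + dist y z) := min_le_min hd h1
    _ = φ w z + dist y z := by rw [hφ]; exact min_add_add_right _ _ _
  have hφzero : ∀ w y, y ∉ w → φ w y = 0 := by
    intro w y hy
    have : infDist y wᶜ = 0 := infDist_zero_of_mem hy
    rw [hφ]; simp [this]
  have hφpos : ∀ w ∈ W, ∀ y ∈ w, 0 < φ w y := by
    intro w hw y hy
    have hne : (wᶜ).Nonempty := Set.nonempty_compl.2 fun h => hWn (h ▸ hw)
    have hcl : IsClosed (wᶜ) := (hWo w hw).isClosed_compl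
    have : 0 < infDist y wᶜ := (hcl.notMem_iff_infDist_pos hne).1 (fun h => h hy)
    exact lt_min this one_pos
  -- the sup function
  set h : Finset (Set Y) → Y → ℝ := fun σ y => ⨆ b : ↥(W \ ↑σ), φ (b : Set Y) y with hh
  have hbdd : ∀ σ y, BddAbove (Set.range fun b : ↥(W \ ↑σ) => φ (b : Set Y) y) := by
    intro σ y
    exact ⟨1, by rintro r ⟨b, rfl⟩; exact hφ1 _ _⟩
  have hh0 : ∀ σ y, 0 ≤ h σ y := fun σ y => Real.iSup_nonneg fun b => hφ0 _ _
  have hhle : ∀ σ (y z : Y), h σ y ≤ h σ z + dist y z := by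
    intro σ y z
    refine Real.iSup_le (fun b => ?_) (by have := hh0 σ z; have := dist_nonneg (x := y) (y := z); linarith)
    calc φ (b : Set Y) y ≤ φ (b : Set Y) z + dist y z := hφlip _ _ _
    _ ≤ h σ z + dist y z := by
        have := le_ciSup (hbdd σ z) b
        linarith
  have hhc : ∀ σ, Continuous (h σ) := by
    intro σ
    refine (LipschitzWith.of_dist_le_mul fun y z => ?_).continuous (K := 1)
    rw [show ((1 : NNReal) : ℝ) * dist y z = dist y z by simp, Real.dist_eq, abs_sub_le_iff]
    constructor
    · linarith [hhle σ y z]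
    · have e := hhle σ z y
      rw [dist_comm z y] at e
      linarith
  -- the disjoint families
  set B : Finset (Set Y) → Set Y := fun σ => {y | ∀ a ∈ σ, 0 < φ a y ∧ h σ y < φ a y} with hB
  have hBo : ∀ σ, IsOpen (B σ) := by
    intro σ
    have : B σ = ⋂ a ∈ σ, ({y | 0 < φ a y} ∩ {y | h σ y < φ a y}) := by
      ext y
      simp only [hB, Set.mem_setOf_eq, Set.mem_iInter, Set.mem_inter_iff]
    rw [this]
    exact isOpen_biInter_finset fun a _ =>
      (isOpen_lt continuous_const (hφc a)).inter (isOpen_lt (hhc σ) (hφc a))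
  refine ⟨B, hBo, ?_, ?_, ?_⟩
  · -- disjointness
    intro σ σ' hσW hσ'W hne hcard
    have hex : ∃ a ∈ σ, a ∉ σ' := by
      by_contra hcon
      push_neg at hcon
      exact hne (Finset.eq_of_subset_of_card_le hcon (le_of_eq hcard.symm))
    have hex' : ∃ a ∈ σ', a ∉ σ := by
      by_contra hcon
      push_neg at hcon
      exact hne (Finset.eq_of_subset_of_card_le hcon (le_of_eq hcard)).symm
    obtain ⟨a, haσ, haσ'⟩ := hex
    obtain ⟨a', ha'σ', ha'σ⟩ := hex'
    refine Set.disjoint_left.2 fun y hy hy' => ?_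
    have h1 := hy a haσ
    have h2 := hy' a' ha'σ'
    have hle1 : φ a' y ≤ h σ y :=
      le_ciSup (hbdd (↑σ) y) (⟨a', ⟨hσ'W ha'σ', ha'σ⟩⟩ : ↥(W \ ↑σ))
    have hle2 : φ a y ≤ h σ' y :=
      le_ciSup (hbdd (↑σ') y) (⟨a, ⟨hσW haσ, haσ'⟩⟩ : ↥(W \ ↑σ'))
    linarith [h1.2, h2.2]
  · -- refinement
    intro σ a ha y hy
    have h1 := (hy a ha).1
    by_contra hya
    rw [hφzero a y hya] at h1
    exact lt_irrefl _ h1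
  · -- coverage
    intro y
    have hfin : {w | w ∈ W ∧ y ∈ w}.Finite := Set.finite_of_encard_le_coe (hmult y)
    set σ : Finset (Set Y) := hfin.toFinset with hσdef
    have hσmem : ∀ a, a ∈ σ ↔ a ∈ W ∧ y ∈ a := by
      intro a; rw [hσdef, Set.Finite.mem_toFinset]; rfl
    have hσW : ↑σ ⊆ W := fun a ha => ((hσmem a).1 ha).1
    have hσne : ∃ a, a ∈ σ := by
      have : y ∈ ⋃₀ W := hWc ▸ Set.mem_univ y
      obtain ⟨w, hw, hyw⟩ := this
      exact ⟨w, (hσmem w).2 ⟨hw, hyw⟩⟩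
    have hcard1 : 1 ≤ σ.card := Finset.card_pos.2 hσne
    have hcardn : σ.card ≤ n + 1 := by
      have := hmult y
      rw [Set.Finite.encard_eq_coe_toFinset_card hfin] at this
      exact_mod_cast this
    refine ⟨σ, hσW, hcard1, hcardn, ?_⟩
    intro a ha
    have haW := ((hσmem a).1 ha).1
    have hya := ((hσmem a).1 ha).2
    have hpos : 0 < φ a y := hφpos a haW y hya
    have hzero : h σ y ≤ 0 := by
      refine Real.iSup_le (fun b => ?_) le_rfl
      have hbW : (b : Set Y) ∈ W := b.2.1
      have hbσ : (b : Set Y) ∉ ↑σ := b.2.2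
      have : y ∉ (b : Set Y) := fun hyb => hbσ ((hσmem _).2 ⟨hbW, hyb⟩)
      rw [hφzero _ _ this]
    exact ⟨hpos, lt_of_le_of_lt hzero hpos⟩

/-- Theorem 3.2: `cat X ≤ dim Y + cat* f` for a continuous map `f : X → Y` from a
path-connected normal space to a metrizable space. -/
theorem catLE_add_of_covDimLE_of_catStarLE
    {X Y : Type*} [TopologicalSpace X] [TopologicalSpace Y]
    [PathConnectedSpace X] [NormalSpace X] [TopologicalSpace.MetrizableSpace Y]
    (f : X → Y) (hf : Continuous f) (n m : ℕ)
    (hdim : CovDimLE Y n) (hcat : CatStarLE f m) :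
    CatLE X (n + m) := by
  classical
  haveI : Nonempty X := PathConnectedSpace.nonempty
  obtain ⟨U, hUo, hUc, hUnif⟩ := hcat
  choose Vn hVn hVc using hUnif
  set C : Set (Set Y) := Set.range fun y => interior (Vn y) with hC
  have hCo : ∀ c ∈ C, IsOpen c := by rintro c ⟨y, rfl⟩; exact isOpen_interior
  have hCc : ⋃₀ C = univ := by
    refine Set.eq_univ_of_forall fun y => ?_
    exact ⟨interior (Vn y), ⟨y, rfl⟩, mem_interior_iff_mem_nhds.2 (hVn y)⟩
  obtain ⟨W, hWo, hWc, hWref, hWmult⟩ := hdim C hCo hCc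
  by_cases huniv : univ ∈ W
  · -- degenerate case: some neighborhood is everything
    obtain ⟨c, hcC, hc⟩ := hWref univ huniv
    obtain ⟨y₀, rfl⟩ := hcC
    have hVuniv : Vn y₀ = univ := Set.eq_univ_of_univ_subset (hc.trans interior_subset)
    have hUcontr : ∀ i, ContractibleIn (U i) := by
      intro i
      have := hVc y₀ i
      rwa [hVuniv, Set.preimage_univ, Set.inter_univ] at this
    refine ⟨fun j => if h : (j : ℕ) < m + 1 then U ⟨j, h⟩ else ∅, fun j => ?_, fun j => ?_, ?_⟩
    · dsimp only
      split_ifs with h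
      · exact hUo _
      · exact isOpen_empty
    · dsimp only
      split_ifs with h
      · exact hUcontr _
      · exact contractibleIn_empty
    · refine Set.eq_univ_of_forall fun x => ?_
      have hx : x ∈ ⋃ i, U i := hUc ▸ Set.mem_univ x
      obtain ⟨s, ⟨i, rfl⟩, hxs⟩ := hx
      have hilt : (i : ℕ) < n + m + 1 := by omega
      refine Set.mem_iUnion.2 ⟨⟨i, hilt⟩, ?_⟩
      have h2 : ((⟨(i : ℕ), hilt⟩ : Fin (n + m + 1)) : ℕ) < m + 1 := i.isLt
      rw [dif_pos h2]
      have : (⟨((⟨(i : ℕ), hilt⟩ : Fin (n + m + 1)) : ℕ), h2⟩ : Fin (m + 1)) = i :=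
        Fin.ext rfl
      rw [this]
      exact hxs
  · -- main case
    letI : MetricSpace Y := TopologicalSpace.metrizableSpaceMetric Y
    obtain ⟨B, hBo, hBd, hBsub, hBcov⟩ := exists_disjoint_families n W hWo hWc huniv hWmult
    set Cov : Fin (n + 1) → Set Y := fun k =>
      ⋃ (σ : Finset (Set Y)) (_ : ↑σ ⊆ W ∧ σ.card = (k : ℕ) + 1), B σ with hCov
    have hCovo : ∀ k, IsOpen (Cov k) :=
      fun k => isOpen_iUnion fun σ => isOpen_iUnion fun _ => hBo σ
    have hCovc : (⋃ k, Cov k) = univ := by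
      refine Set.eq_univ_of_forall fun y => ?_
      obtain ⟨σ, hσW, h1, hn1, hyB⟩ := hBcov y
      have hk : σ.card - 1 < n + 1 := by omega
      refine Set.mem_iUnion.2 ⟨⟨σ.card - 1, hk⟩, ?_⟩
      refine Set.mem_iUnion.2 ⟨σ, Set.mem_iUnion.2 ⟨⟨hσW, ?_⟩, hyB⟩⟩
      simp only []
      omega
    obtain ⟨V, hVo, hVsub, hVdisj, hVcount⟩ := ostrand_columns U hUo hUc (n + m + 1)
    obtain ⟨Wc, hWco, hWcsub, hWcdisj, hWccount⟩ := ostrand_columns Cov hCovo hCovc (n + m + 1)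
    -- the pieces
    set Good : Fin (n + 1) → Finset (Set Y) → Prop := fun k σ =>
      ↑σ ⊆ W ∧ σ.card = (k : ℕ) + 1 with hGood
    set P : Fin (n + m + 1) → (Fin (m + 1) × Fin (n + 1) × Finset (Set Y)) → Set X :=
      fun j p => if Good p.2.1 p.2.2 then
        V p.1 j ∩ f ⁻¹' (Wc p.2.1 j ∩ B p.2.2) else ∅ with hP
    have hPo : ∀ j p, IsOpen (P j p) := by
      intro j p
      simp only [hP]
      split_ifs
      · exact (hVo _ _).inter (((hWco _ _).inter (hBo _)).preimage hf)
      · exact isOpen_empty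
    have hPc : ∀ j p, ContractibleIn (P j p) := by
      intro j p
      simp only [hP]
      split_ifs with hg
      · obtain ⟨a, ha⟩ := Finset.card_pos.1 (by omega : 0 < p.2.2.card)
        have haW : a ∈ W := hg.1 ha
        obtain ⟨c, hcC, hac⟩ := hWref a haW
        obtain ⟨y₁, rfl⟩ := hcC
        refine (hVc y₁ p.1).mono fun x hx => ?_
        exact ⟨hVsub _ _ hx.1, (interior_subset : interior (Vn y₁) ⊆ Vn y₁) (hac (hBsub p.2.2 a ha hx.2.2))⟩
      · exact contractibleIn_empty
    have hPd : ∀ j, Pairwise (Function.onFun Disjoint (P j)) := by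
      intro j p p' hne
      show Disjoint (P j p) (P j p')
      simp only [hP]
      split_ifs with h1 h2 h2
      · rcases eq_or_ne p.1 p'.1 with he1 | hne1
        · rcases eq_or_ne p.2.1 p'.2.1 with he2 | hne2
          · have hne3 : p.2.2 ≠ p'.2.2 := by
              intro he3
              exact hne (Prod.ext he1 (Prod.ext he2 he3))
            have hcards : p.2.2.card = p'.2.2.card := by
              rw [h1.2, h2.2, he2]
            have := hBd p.2.2 p'.2.2 h1.1 h2.1 hne3 hcards
            exact Disjoint.mono (fun x hx => hx.2.2) (fun x hx => hx.2.2) (this.preimage f)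
          · have := hWcdisj j _ _ hne2
            exact Disjoint.mono (fun x hx => hx.2.1) (fun x hx => hx.2.1) (this.preimage f)
        · exact Disjoint.mono (fun x hx => hx.1) (fun x hx => hx.1) (hVdisj j _ _ hne1)
      · exact disjoint_empty _
      · exact empty_disjoint _
      · exact disjoint_empty _
    refine ⟨fun j => ⋃ p, P j p, fun j => isOpen_iUnion (hPo j), fun j =>
      contractibleIn_iUnion_of_disjoint (P j) (hPo j) (hPc j) (hPd j), ?_⟩
    refine Set.eq_univ_of_forall fun x => ?_
    set S : Set (Fin (n + m + 1)) := {j | ∃ i, x ∈ V i j} with hS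
    set T : Set (Fin (n + m + 1)) := {j | ∃ k, f x ∈ Wc k j} with hT
    have hScard : n + m + 1 ≤ S.ncard + m := hVcount x
    have hTcard : n + m + 1 ≤ T.ncard + n := hWccount (f x)
    have hST : (S ∩ T).Nonempty := by
      by_contra hcon
      rw [Set.not_nonempty_iff_eq_empty] at hcon
      have hdisj : Disjoint S T := Set.disjoint_iff_inter_eq_empty.2 hcon
      have hcup : (S ∪ T).ncard ≤ n + m + 1 := by
        have h5 := Set.ncard_le_ncard (Set.subset_univ (S ∪ T)) Set.finite_univ
        rwa [Set.ncard_univ, Nat.card_eq_fintype_card, Fintype.card_fin] at h5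
      have h6 := Set.ncard_union_eq hdisj (Set.toFinite _) (Set.toFinite _)
      omega
    obtain ⟨j, hjS, hjT⟩ := hST
    obtain ⟨i, hxV⟩ := hjS
    obtain ⟨k, hfW⟩ := hjT
    have hfC : f x ∈ Cov k := hWcsub k j hfW
    simp only [hCov] at hfC
    obtain ⟨σ, hmem⟩ := Set.mem_iUnion.1 hfC
    obtain ⟨hgood, hfB⟩ := Set.mem_iUnion.1 hmem
    refine Set.mem_iUnion.2 ⟨j, Set.mem_iUnion.2 ⟨(i, k, σ), ?_⟩⟩
    simp only [hP]
    rw [if_pos hgood]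
    exact ⟨hxV, hfW, hfB⟩
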